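/- For every integer P ≥ 1 there is the following asymptotic, with implied constant depending at most on ω(P), the number of distinct prime factors of P: for all real x ≥ 3, #{n ∈ ℕ : 1 ≤ n ≤ x and for every prime p dividing P the p-adic valuation v_p(n) is even} = (∏_{p ∣ P} (1 + 1/p)^{−1})·x + O((log x)^{ω(P)}). -/

import Mathlib

open scoped Classical
open Finset

private lemma fact_pow_mul {q : ℕ} (hq : q.Prime) (i : ℕ) {m : ℕ} (hm : m ≠ 0) {p : ℕ}
    (hpq : p ≠ q) : ((q ^ i) * m).factorization p = m.factorization p := by
  rw [Nat.factorization_mul (pow_ne_zero i hq.ne_zero) hm, Finsupp.add_apply,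
    hq.factorization_pow, Finsupp.single_apply, if_neg (fun h => hpq h.symm), zero_add]

private lemma fact_mul {q : ℕ} (hq : q.Prime) {m : ℕ} (hm : m ≠ 0) {p : ℕ}
    (hpq : p ≠ q) : (q * m).factorization p = m.factorization p := by
  rw [← pow_one q]; exact fact_pow_mul hq 1 hm hpq

noncomputable def cnt (F : Finset ℕ) (N : ℕ) : ℕ :=
  ((Finset.Icc 1 N).filter (fun n : ℕ => ∀ p ∈ F, Even (n.factorization p))).card

private lemma cnt_dvd {q : ℕ} (hq : q.Prime) {F : Finset ℕ} (hqF : q ∉ F) (N : ℕ) :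
    ((Finset.Icc 1 N).filter
        (fun m : ℕ => (∀ p ∈ F, Even (m.factorization p)) ∧ q ∣ m)).card
      = cnt F (N / q) := by
  apply Finset.card_bij' (fun m _ => m / q) (fun m _ => q * m)
  · intro m hm
    simp only [mem_filter, mem_Icc] at hm ⊢
    obtain ⟨⟨h1, h2⟩, hc, hd⟩ := hm
    obtain ⟨m', rfl⟩ := hd
    have hm' : m' ≠ 0 := by rintro rfl; simp at h1
    rw [Nat.mul_div_cancel_left _ hq.pos]
    refine ⟨⟨Nat.one_le_iff_ne_zero.2 hm',
      (Nat.le_div_iff_mul_le hq.pos).2 (by rwa [mul_comm])⟩, ?_⟩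
    intro p hp
    have := hc p hp
    rwa [fact_mul hq hm' (fun h => hqF (h ▸ hp))] at this
  · intro m hm
    simp only [mem_filter, mem_Icc] at hm ⊢
    obtain ⟨⟨h1, h2⟩, hc⟩ := hm
    have hm' : m ≠ 0 := Nat.one_le_iff_ne_zero.1 h1
    refine ⟨⟨Nat.one_le_iff_ne_zero.2 (mul_ne_zero hq.ne_zero hm'),
      by rw [mul_comm]; exact (Nat.le_div_iff_mul_le hq.pos).1 h2⟩, ?_, Dvd.intro m rfl⟩
    intro p hp
    rw [fact_mul hq hm' (fun h => hqF (h ▸ hp))]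
    exact hc p hp
  · intro m hm
    simp only [mem_filter, mem_Icc] at hm
    exact Nat.mul_div_cancel' hm.2.2
  · intro m hm
    exact Nat.mul_div_cancel_left _ hq.pos
private lemma cnt_fiber {q : ℕ} (hq : q.Prime) {F : Finset ℕ} (hqF : q ∉ F) {N J : ℕ}
    (hJ : N < q ^ (2 * J)) :
    cnt (insert q F) N
      = ∑ j ∈ Finset.range J,
          ((Finset.Icc 1 (N / q ^ (2 * j))).filter
            (fun m : ℕ => (∀ p ∈ F, Even (m.factorization p)) ∧ ¬ q ∣ m)).card := by
  unfold cnt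
  rw [Finset.card_eq_sum_card_fiberwise
    (f := fun n : ℕ => n.factorization q / 2) (t := Finset.range J) ?_]
  · apply Finset.sum_congr rfl
    intro j hj
    apply Finset.card_bij' (fun n _ => n / q ^ (2 * j)) (fun m _ => q ^ (2 * j) * m)
    · intro n hn
      simp only [mem_filter, mem_Icc, mem_insert] at hn ⊢
      obtain ⟨⟨⟨h1, h2⟩, hc⟩, hfib⟩ := hn
      have hn0 : n ≠ 0 := Nat.one_le_iff_ne_zero.1 h1
      have hev : Even (n.factorization q) := hc q (Or.inl rfl)
      have hvq : n.factorization q = 2 * j := by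
        obtain ⟨r, hr⟩ := hev
        omega
      have hdvd : q ^ (2 * j) ∣ n := hvq ▸ Nat.ordProj_dvd n q
      have hm0 : n / q ^ (2 * j) ≠ 0 :=
        Nat.one_le_iff_ne_zero.1 (Nat.div_pos (Nat.le_of_dvd (Nat.pos_of_ne_zero hn0) hdvd)
          (pow_pos hq.pos _))
      refine ⟨⟨Nat.one_le_iff_ne_zero.2 hm0, Nat.div_le_div_right h2⟩, ?_, ?_⟩
      · intro p hp
        have hpq : p ≠ q := fun h => hqF (h ▸ hp)
        have := hc p (Or.inr hp)
        have heq : n = q ^ (2 * j) * (n / q ^ (2 * j)) := (Nat.mul_div_cancel' hdvd).symm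
        rwa [heq, fact_pow_mul hq _ hm0 hpq] at this
      · rw [← hvq]
        exact Nat.not_dvd_ordCompl hq hn0
    · intro m hm
      simp only [mem_filter, mem_Icc, mem_insert] at hm ⊢
      obtain ⟨⟨h1, h2⟩, hc, hnd⟩ := hm
      have hm0 : m ≠ 0 := Nat.one_le_iff_ne_zero.1 h1
      have hq0 : (0:ℕ) < q ^ (2 * j) := pow_pos hq.pos _
      have hvq : (q ^ (2 * j) * m).factorization q = 2 * j := by
        rw [Nat.factorization_mul (pow_ne_zero _ hq.ne_zero) hm0, Finsupp.add_apply,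
          hq.factorization_pow, Finsupp.single_apply, if_pos rfl,
          Nat.factorization_eq_zero_of_not_dvd hnd, add_zero]
      refine ⟨⟨⟨Nat.one_le_iff_ne_zero.2 (mul_ne_zero (pow_ne_zero _ hq.ne_zero) hm0),
        by rw [mul_comm]; exact (Nat.le_div_iff_mul_le hq0).1 h2⟩, ?_⟩, ?_⟩
      · rintro p (rfl | hp)
        · rw [hvq]; exact even_two_mul j
        · rw [fact_pow_mul hq _ hm0 (fun h => hqF (h ▸ hp))]
          exact hc p hp
      · omega
    · intro n hn
      simp only [mem_filter, mem_Icc, mem_insert] at hn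
      obtain ⟨⟨⟨h1, h2⟩, hc⟩, hfib⟩ := hn
      have hn0 : n ≠ 0 := Nat.one_le_iff_ne_zero.1 h1
      have hev : Even (n.factorization q) := hc q (Or.inl rfl)
      have hvq : n.factorization q = 2 * j := by obtain ⟨r, hr⟩ := hev; omega
      exact Nat.mul_div_cancel' (hvq ▸ Nat.ordProj_dvd n q)
    · intro m hm
      exact Nat.mul_div_cancel_left _ (pow_pos hq.pos _)
  · intro n hn
    simp only [Finset.coe_filter, Set.mem_setOf_eq, Finset.mem_coe, mem_filter, mem_Icc, mem_insert, Finset.mem_range] at hn ⊢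
    obtain ⟨⟨h1, h2⟩, hc⟩ := hn
    have hn0 : n ≠ 0 := Nat.one_le_iff_ne_zero.1 h1
    have : q ^ (n.factorization q) ≤ n := Nat.le_of_dvd (Nat.pos_of_ne_zero hn0)
      (Nat.ordProj_dvd n q)
    have hlt : q ^ (n.factorization q) < q ^ (2 * J) := lt_of_le_of_lt (this.trans h2) hJ
    have := (pow_lt_pow_iff_right₀ hq.one_lt).1 hlt
    omega
lemma cnt_split {q : ℕ} (hq : q.Prime) {F : Finset ℕ} (hqF : q ∉ F) (N : ℕ) :
    ((Finset.Icc 1 N).filter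
        (fun m : ℕ => (∀ p ∈ F, Even (m.factorization p)) ∧ ¬ q ∣ m)).card
      = cnt F N - cnt F (N / q) := by
  have h := Finset.card_filter_add_card_filter_not
    (s := (Finset.Icc 1 N).filter (fun n : ℕ => ∀ p ∈ F, Even (n.factorization p)))
    (p := fun m : ℕ => q ∣ m)
  rw [Finset.filter_filter, Finset.filter_filter] at h
  rw [← cnt_dvd hq hqF N]
  unfold cnt
  omega

set_option maxHeartbeats 2000000 in
theorem main_ind (F : Finset ℕ) (hF : ∀ p ∈ F, p.Prime) :
    ∀ y : ℝ, 0 ≤ y →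
      |((cnt F ⌊y⌋₊ : ℝ)) - (∏ p ∈ F, ((1:ℝ) + 1/p)⁻¹) * y|
        ≤ 5 ^ F.card * (1 + Real.log (max y 1)) ^ F.card := by
  induction F using Finset.induction_on with
  | empty =>
    intro y hy
    have h1 : cnt ∅ ⌊y⌋₊ = ⌊y⌋₊ := by
      unfold cnt
      rw [Finset.filter_true_of_mem (fun n _ => by simp)]
      simp [Nat.card_Icc]
    rw [h1]
    simp only [Finset.prod_empty, Finset.card_empty, pow_zero, one_mul]
    rw [abs_le]
    constructor
    · linarith [Nat.lt_floor_add_one y]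
    · linarith [Nat.floor_le hy]
  | @insert q F hqF IH =>
    intro y hy
    have hq : q.Prime := hF q (Finset.mem_insert_self q F)
    have hF' : ∀ p ∈ F, p.Prime := fun p hp => hF p (Finset.mem_insert_of_mem hp)
    have IH' := IH hF'
    set f := F.card with hf
    set Q : ℝ := (q : ℝ) with hQdef
    have hQ2 : (2:ℝ) ≤ Q := by rw [hQdef]; exact_mod_cast hq.two_le
    have hQ0 : (0:ℝ) < Q := by linarith
    set D : ℝ := 1 + Real.log (max y 1) with hD
    have hD1 : (1:ℝ) ≤ D := by
      have := Real.log_nonneg (le_max_right y 1)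
      linarith
    set β : ℝ := ∏ p ∈ F, ((1:ℝ) + 1/p)⁻¹ with hβ
    have hβ0 : 0 ≤ β := Finset.prod_nonneg (fun p _ => by positivity)
    have hβ1 : β ≤ 1 := by
      apply Finset.prod_le_one (fun p _ => by positivity)
      intro p hp
      rw [inv_le_one_iff₀]
      right
      have : (0:ℝ) ≤ 1/(p:ℝ) := by positivity
      linarith
    have hprod : ∏ p ∈ insert q F, ((1:ℝ) + 1/p)⁻¹ = (1 + 1/Q)⁻¹ * β :=
      Finset.prod_insert hqF
    have hcard : (insert q F).card = f + 1 := Finset.card_insert_of_notMem hqF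
    rw [hprod, hcard]
    -- case N = 0
    rcases Nat.eq_zero_or_pos ⌊y⌋₊ with hN0 | hN1
    · have hy1 : y < 1 := by
        by_contra h
        push_neg at h
        have := Nat.le_floor (by exact_mod_cast h : ((1:ℕ):ℝ) ≤ y)
        omega
      rw [hN0]
      have h2 : |(((0:ℕ)):ℝ) - (1+1/Q)⁻¹ * β * y| ≤ 1 := by
        rw [Nat.cast_zero, zero_sub, abs_neg, abs_of_nonneg (by positivity)]
        have h3 : (1+1/Q)⁻¹ ≤ 1 := by
          rw [inv_le_one_iff₀]; right
          have : (0:ℝ) < 1/Q := by positivity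
          linarith
        have hb : (1+1/Q)⁻¹ * β ≤ 1 :=
          mul_le_one₀ h3 hβ0 hβ1
        exact mul_le_one₀ hb hy hy1.le
      calc |(((0:ℕ)):ℝ) - (1+1/Q)⁻¹ * β * y| ≤ 1 := h2
        _ ≤ 5 ^ (f+1) * D ^ (f+1) := by
          have h5 : (1:ℝ) ≤ 5 ^ (f+1) := one_le_pow₀ (by norm_num)
          have hDp : (1:ℝ) ≤ D ^ (f+1) := one_le_pow₀ hD1
          nlinarith
    · -- main case: N ≥ 1
      set N := ⌊y⌋₊ with hNdef
      have hy1 : (1:ℝ) ≤ y := by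
        by_contra h
        push_neg at h
        have : N = 0 := Nat.floor_eq_zero.2 h
        omega
      have hmax : max y 1 = y := max_eq_left hy1
      set L := Nat.log q N with hLdef
      set J := L / 2 + 1 with hJdef
      have hJ : N < q ^ (2 * J) := by
        have ha : N < q ^ (L + 1) := Nat.lt_pow_succ_log_self hq.one_lt N
        exact ha.trans_le (Nat.pow_le_pow_right hq.pos (by omega))
      have hmono : ∀ M1 M2 : ℕ, M1 ≤ M2 → cnt F M1 ≤ cnt F M2 := by
        intro M1 M2 h
        unfold cnt
        exact Finset.card_le_card (Finset.filter_subset_filter _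
          (Finset.Icc_subset_Icc_right h))
      have h1 : (cnt (insert q F) N : ℝ)
          = ∑ j ∈ Finset.range J,
              ((cnt F (N / q ^ (2*j)) : ℝ) - (cnt F (N / q ^ (2*j+1)) : ℝ)) := by
        rw [cnt_fiber hq hqF hJ, Nat.cast_sum]
        apply Finset.sum_congr rfl
        intro j _
        rw [cnt_split hq hqF (N / q ^ (2*j)),
          Nat.cast_sub (hmono _ _ (Nat.div_le_self _ _)),
          Nat.div_div_eq_div_mul, ← pow_succ]
      have hfloor : ∀ i : ℕ, N / q ^ i = ⌊y / Q ^ i⌋₊ := by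
        intro i
        have hc : ((q ^ i : ℕ) : ℝ) = Q ^ i := by rw [hQdef]; push_cast; ring
        rw [hNdef, ← Nat.floor_div_natCast y (q ^ i), hc]
      have hg : ∀ i : ℕ, |(cnt F (N / q ^ i) : ℝ) - β * (y / Q ^ i)| ≤ 5 ^ f * D ^ f := by
        intro i
        have hyi : (0:ℝ) ≤ y / Q ^ i := by positivity
        have h2 := IH' (y / Q ^ i) hyi
        rw [hfloor i]
        refine h2.trans ?_
        have hle1 : y / Q ^ i ≤ y := div_le_self hy (one_le_pow₀ (by linarith))
        have hmax2 : max (y / Q ^ i) 1 ≤ max y 1 :=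
          max_le (hle1.trans (le_max_left y 1)) (le_max_right y 1)
        have hlog : Real.log (max (y / Q ^ i) 1) ≤ Real.log (max y 1) :=
          Real.log_le_log (lt_of_lt_of_le one_pos (le_max_right _ 1)) hmax2
        have hb1 : (0:ℝ) ≤ 1 + Real.log (max (y / Q ^ i) 1) := by
          have := Real.log_nonneg (le_max_right (y / Q ^ i) 1)
          linarith
        exact mul_le_mul_of_nonneg_left
          (pow_le_pow_left₀ hb1 (by rw [hD]; linarith) f) (by positivity)
      have hsum : ∑ j ∈ Finset.range J, (β * (y / Q ^ (2*j)) - β * (y / Q ^ (2*j+1)))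
          = β * y * (1 - 1/Q) * ∑ j ∈ Finset.range J, (1/Q^2) ^ j := by
        rw [Finset.mul_sum]
        apply Finset.sum_congr rfl
        intro j _
        have hQj : (0:ℝ) < Q ^ (2*j) := by positivity
        rw [pow_succ, pow_mul, div_pow, one_pow]
        field_simp
      have expand : (cnt (insert q F) N : ℝ) - (1+1/Q)⁻¹ * β * y
          = (∑ j ∈ Finset.range J,
              (((cnt F (N / q ^ (2*j)) : ℝ) - β * (y / Q ^ (2*j)))
                - ((cnt F (N / q ^ (2*j+1)) : ℝ) - β * (y / Q ^ (2*j+1)))))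
            + (β * y * (1 - 1/Q) * (∑ j ∈ Finset.range J, (1/Q^2) ^ j)
                - (1+1/Q)⁻¹ * β * y) := by
        have e1 : ∑ j ∈ Finset.range J,
            ((cnt F (N / q ^ (2*j)) : ℝ) - (cnt F (N / q ^ (2*j+1)) : ℝ))
            = (∑ j ∈ Finset.range J,
                (((cnt F (N / q ^ (2*j)) : ℝ) - β * (y / Q ^ (2*j)))
                  - ((cnt F (N / q ^ (2*j+1)) : ℝ) - β * (y / Q ^ (2*j+1)))))
              + ∑ j ∈ Finset.range J, (β * (y / Q ^ (2*j)) - β * (y / Q ^ (2*j+1))) := by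
          rw [← Finset.sum_add_distrib]
          exact Finset.sum_congr rfl (fun j _ => by ring)
        rw [h1, e1, hsum]
        ring
      have hQne : Q ≠ 0 := ne_of_gt hQ0
      have hr1 : (1/Q^2 : ℝ) ≠ 1 := by
        have : (1/Q^2:ℝ) < 1 := by rw [div_lt_one (by positivity)]; nlinarith
        exact ne_of_lt this
      have hgeom : (1 - 1/Q) * (∑ j ∈ Finset.range J, (1/Q^2) ^ j)
          = (1+1/Q)⁻¹ * (1 - (1/Q^2)^J) := by
        rw [geom_sum_eq hr1]
        have hQ1 : Q - 1 ≠ 0 := by linarith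
        have hQp1 : Q + 1 ≠ 0 := by linarith
        have h1Q : (1:ℝ) + 1/Q ≠ 0 := by positivity
        have hrne : (1/Q^2 : ℝ) - 1 ≠ 0 := sub_ne_zero.2 hr1
        have hQQ3 : Q - Q^3 ≠ 0 := by
          have ha : Q^2 ≥ 4 := by nlinarith
          have hb : Q^3 ≥ 4*Q := by nlinarith
          exact ne_of_lt (by linarith)
        have hA : (1:ℝ) - Q^2 ≠ 0 := by
          have : (4:ℝ) ≤ Q^2 := by nlinarith
          exact ne_of_lt (by linarith)
        have hB : Q^2 - 1 ≠ 0 := by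
          have : (4:ℝ) ≤ Q^2 := by nlinarith
          exact ne_of_gt (by linarith)
        generalize ((1:ℝ)/Q^2) ^ J = t
        field_simp
        ring
      have hsec : β * y * (1 - 1/Q) * (∑ j ∈ Finset.range J, (1/Q^2) ^ j)
            - (1+1/Q)⁻¹ * β * y
          = -(β * ((1+1/Q)⁻¹ * (y * (1/Q^2)^J))) := by
        have e2 : β * y * (1 - 1/Q) * (∑ j ∈ Finset.range J, (1/Q^2) ^ j)
            = β * y * ((1 - 1/Q) * ∑ j ∈ Finset.range J, (1/Q^2) ^ j) := by ring
        rw [e2, hgeom]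
        ring
      have hsecb : |β * y * (1 - 1/Q) * (∑ j ∈ Finset.range J, (1/Q^2) ^ j)
          - (1+1/Q)⁻¹ * β * y| ≤ 1 := by
        rw [hsec, abs_neg]
        have hinv1 : ((1:ℝ)+1/Q)⁻¹ ≤ 1 := by
          rw [inv_le_one_iff₀]
          right
          have : (0:ℝ) < 1/Q := by positivity
          linarith
        have hyr : y * (1/Q^2)^J ≤ 1 := by
          have hQJ : ((N:ℝ) + 1) ≤ Q ^ (2*J) := by
            rw [hQdef]
            exact_mod_cast hJ
          have hylt : y < (N:ℝ) + 1 := by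
            rw [hNdef]
            exact Nat.lt_floor_add_one y
          have hpow : ((1:ℝ)/Q^2)^J = (Q ^ (2*J))⁻¹ := by
            rw [one_div, inv_pow, ← pow_mul]
          rw [hpow, ← div_eq_mul_inv, div_le_one (by positivity)]
          linarith
        rw [abs_of_nonneg (by positivity)]
        exact mul_le_one₀ hβ1 (by positivity) (mul_le_one₀ hinv1 (by positivity) hyr)
      have hJr : (J:ℝ) ≤ D := by
        have hNne : N ≠ 0 := by omega
        have hqL : q ^ L ≤ N := Nat.pow_log_le_self q hNne
        have hQL : (Q:ℝ)^L ≤ (N:ℝ) := by rw [hQdef]; exact_mod_cast hqL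
        have hNy : (N:ℝ) ≤ y := Nat.floor_le hy
        have hlogy := Real.log_le_log (pow_pos hQ0 L) (hQL.trans hNy)
        rw [Real.log_pow] at hlogy
        have hlog2 : Real.log 2 ≤ Real.log Q := Real.log_le_log (by norm_num) hQ2
        have hL2 : (L:ℝ) * Real.log 2 ≤ Real.log y := by
          have hm := mul_le_mul_of_nonneg_left hlog2 (Nat.cast_nonneg (α := ℝ) L)
          linarith
        have hlog2half : (1/2:ℝ) ≤ Real.log 2 := by
          have := Real.log_two_gt_d9
          linarith
        have hJL : (J:ℝ) ≤ (L:ℝ)/2 + 1 := by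
          have h2J : 2 * J ≤ L + 2 := by omega
          have : (2:ℝ) * (J:ℝ) ≤ (L:ℝ) + 2 := by exact_mod_cast h2J
          linarith
        have hLhalf : (L:ℝ)/2 ≤ Real.log y := by
          have hm := mul_le_mul_of_nonneg_left hlog2half (Nat.cast_nonneg (α := ℝ) L)
          nlinarith
        rw [hD, hmax]
        linarith
      -- final assembly
      have hsum_bound : |∑ j ∈ Finset.range J,
            (((cnt F (N / q ^ (2*j)) : ℝ) - β * (y / Q ^ (2*j)))
              - ((cnt F (N / q ^ (2*j+1)) : ℝ) - β * (y / Q ^ (2*j+1))))|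
          ≤ (J:ℝ) * (2 * (5 ^ f * D ^ f)) := by
        refine (Finset.abs_sum_le_sum_abs _ _).trans ?_
        have hb : ∀ j ∈ Finset.range J,
            |((cnt F (N / q ^ (2*j)) : ℝ) - β * (y / Q ^ (2*j)))
              - ((cnt F (N / q ^ (2*j+1)) : ℝ) - β * (y / Q ^ (2*j+1)))|
            ≤ 2 * (5 ^ f * D ^ f) := by
          intro j _
          have h2 := hg (2*j)
          have h3 := hg (2*j+1)
          calc |((cnt F (N / q ^ (2*j)) : ℝ) - β * (y / Q ^ (2*j)))
              - ((cnt F (N / q ^ (2*j+1)) : ℝ) - β * (y / Q ^ (2*j+1)))|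
              ≤ |(cnt F (N / q ^ (2*j)) : ℝ) - β * (y / Q ^ (2*j))|
                + |(cnt F (N / q ^ (2*j+1)) : ℝ) - β * (y / Q ^ (2*j+1))| := abs_sub _ _
            _ ≤ 2 * (5 ^ f * D ^ f) := by linarith
        refine (Finset.sum_le_sum hb).trans ?_
        rw [Finset.sum_const, Finset.card_range, nsmul_eq_mul]
      have hE1 : (1:ℝ) ≤ 5 ^ f * D ^ f := by
        have h5 : (1:ℝ) ≤ 5 ^ f := one_le_pow₀ (by norm_num)
        have hDf : (1:ℝ) ≤ D ^ f := one_le_pow₀ hD1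
        nlinarith
      calc |(cnt (insert q F) N : ℝ) - (1+1/Q)⁻¹ * β * y|
          ≤ (J:ℝ) * (2 * (5 ^ f * D ^ f)) + 1 := by
            rw [expand]
            exact (abs_add_le _ _).trans (by linarith [hsum_bound, hsecb])
        _ ≤ 5 ^ (f+1) * D ^ (f+1) := by
            have hJ2 : (J:ℝ) * (2 * (5 ^ f * D ^ f)) ≤ D * (2 * (5 ^ f * D ^ f)) :=
              mul_le_mul_of_nonneg_right hJr (by positivity)
            have hX : (1:ℝ) ≤ 5 ^ f * D ^ f * D := by nlinarith
            rw [pow_succ, pow_succ]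
            nlinarith

/-- The counting asymptotic of Corollary 7: for `P ≥ 1`, the number of `n ≤ x` all of
whose `p`-adic valuations at primes `p ∣ P` are even is
`(∏_{p ∣ P} (1 + 1/p)^{−1})·x + O((log x)^{ω(P)})`, with implied constant depending
only on `ω(P)`. -/
theorem stmt_17 (k : ℕ) :
    ∃ C : ℝ, 0 < C ∧ ∀ P : ℕ, 1 ≤ P → P.primeFactors.card = k →
      ∀ x : ℝ, 3 ≤ x →
        |(((Finset.Icc 1 ⌊x⌋₊).filter
              (fun n : ℕ => ∀ p ∈ P.primeFactors, Even (n.factorization p))).card : ℝ)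
            - (∏ p ∈ P.primeFactors, ((1 : ℝ) + 1 / (p : ℝ))⁻¹) * x|
          ≤ C * (Real.log x) ^ k := by
  refine ⟨10 ^ k, by positivity, ?_⟩
  intro P hP hcard x hx
  have hF : ∀ p ∈ P.primeFactors, p.Prime := fun p hp => Nat.prime_of_mem_primeFactors hp
  have h := main_ind P.primeFactors hF x (by linarith)
  rw [hcard] at h
  have hx1 : max x 1 = x := max_eq_left (by linarith)
  rw [hx1] at h
  unfold cnt at h
  have hlog1 : (1:ℝ) ≤ Real.log x := by
    rw [Real.le_log_iff_exp_le (by linarith)]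
    have := Real.exp_one_lt_d9
    linarith
  have hbound : (1 + Real.log x) ^ k ≤ 2 ^ k * (Real.log x) ^ k := by
    rw [← mul_pow]
    exact pow_le_pow_left₀ (by linarith) (by linarith) k
  calc |(((Finset.Icc 1 ⌊x⌋₊).filter
              (fun n : ℕ => ∀ p ∈ P.primeFactors, Even (n.factorization p))).card : ℝ)
            - (∏ p ∈ P.primeFactors, ((1 : ℝ) + 1 / (p : ℝ))⁻¹) * x|
      ≤ 5 ^ k * (1 + Real.log x) ^ k := h
    _ ≤ 5 ^ k * (2 ^ k * (Real.log x) ^ k) :=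
        mul_le_mul_of_nonneg_left hbound (by positivity)
    _ = 10 ^ k * (Real.log x) ^ k := by
        rw [← mul_assoc, ← mul_pow]
        norm_num
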